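/- Pointwise strong monotonicity with plasticity term: for all A, B in a real inner product space and ε > 0, ⟨2μ·A + τ·A/|A|_ε − 2μ·B − τ·B/|B|_ε, A − B⟩ ≥ 2μ‖A − B‖², where μ > 0 and τ ≥ 0. -/

import Mathlib

open RealInnerProductSpace

theorem bingham_strong_monotonicity
    {V : Type*} [NormedAddCommGroup V] [InnerProductSpace ℝ V]
    (ε μ τ : ℝ) (hε : 0 < ε) (hμ : 0 < μ) (hτ : 0 ≤ τ)
    (T : V → V)
    (hT : ∀ A : V, T A = (2 * μ) • A + (τ / Real.sqrt (‖A‖ ^ 2 + ε ^ 2)) • A)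
    (A B : V) :
    2 * μ * ‖A - B‖ ^ 2 ≤ ⟪T A - T B, A - B⟫ := by
  set sA := Real.sqrt (‖A‖ ^ 2 + ε ^ 2) with hsA
  set sB := Real.sqrt (‖B‖ ^ 2 + ε ^ 2) with hsB
  have hsA_pos : 0 < sA := Real.sqrt_pos.2 (by positivity)
  have hsB_pos : 0 < sB := Real.sqrt_pos.2 (by positivity)
  have hsA_sq : sA ^ 2 = ‖A‖ ^ 2 + ε ^ 2 := Real.sq_sqrt (by positivity)
  have hsB_sq : sB ^ 2 = ‖B‖ ^ 2 + ε ^ 2 := Real.sq_sqrt (by positivity)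
  have hAB : ⟪A, B⟫ ≤ ‖A‖ * ‖B‖ := real_inner_le_norm A B
  -- main algebraic inequality (monotonicity of x ↦ x/√(x²+ε²))
  have h : 0 ≤ ‖A‖ ^ 2 * sB + ‖B‖ ^ 2 * sA - (sA + sB) * (‖A‖ * ‖B‖) := by
    rcases le_total ‖B‖ ‖A‖ with hc | hc
    · have hsq : (‖B‖ * sA) ^ 2 ≤ (‖A‖ * sB) ^ 2 := by
        have h1 : ‖B‖ ^ 2 ≤ ‖A‖ ^ 2 := by nlinarith [norm_nonneg B]
        calc (‖B‖ * sA) ^ 2 = ‖B‖ ^ 2 * (‖A‖ ^ 2 + ε ^ 2) := by rw [mul_pow, hsA_sq]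
          _ ≤ ‖A‖ ^ 2 * (‖B‖ ^ 2 + ε ^ 2) := by nlinarith [sq_nonneg ε]
          _ = (‖A‖ * sB) ^ 2 := by rw [mul_pow, hsB_sq]
      have h1 : ‖B‖ * sA ≤ ‖A‖ * sB := by
        have := Real.sqrt_le_sqrt hsq
        rwa [Real.sqrt_sq (by positivity), Real.sqrt_sq (by positivity)] at this
      nlinarith [mul_nonneg (sub_nonneg.2 hc) (sub_nonneg.2 h1)]
    · have hsq : (‖A‖ * sB) ^ 2 ≤ (‖B‖ * sA) ^ 2 := by
        have h1 : ‖A‖ ^ 2 ≤ ‖B‖ ^ 2 := by nlinarith [norm_nonneg A]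
        calc (‖A‖ * sB) ^ 2 = ‖A‖ ^ 2 * (‖B‖ ^ 2 + ε ^ 2) := by rw [mul_pow, hsB_sq]
          _ ≤ ‖B‖ ^ 2 * (‖A‖ ^ 2 + ε ^ 2) := by nlinarith [sq_nonneg ε]
          _ = (‖B‖ * sA) ^ 2 := by rw [mul_pow, hsA_sq]
      have h1 : ‖A‖ * sB ≤ ‖B‖ * sA := by
        have := Real.sqrt_le_sqrt hsq
        rwa [Real.sqrt_sq (by positivity), Real.sqrt_sq (by positivity)] at this
      nlinarith [mul_nonneg (sub_nonneg.2 hc) (sub_nonneg.2 h1)]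
  have key : 0 ≤ ‖A‖ ^ 2 / sA + ‖B‖ ^ 2 / sB - (1 / sA + 1 / sB) * (‖A‖ * ‖B‖) := by
    have h' := div_nonneg h (mul_pos hsA_pos hsB_pos).le
    have heq : (‖A‖ ^ 2 * sB + ‖B‖ ^ 2 * sA - (sA + sB) * (‖A‖ * ‖B‖)) / (sA * sB)
        = ‖A‖ ^ 2 / sA + ‖B‖ ^ 2 / sB - (1 / sA + 1 / sB) * (‖A‖ * ‖B‖) := by
      field_simp
      ring
    linarith [heq ▸ h']
  have expand : ⟪T A - T B, A - B⟫
      = 2 * μ * ‖A - B‖ ^ 2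
        + τ * (‖A‖ ^ 2 / sA + ‖B‖ ^ 2 / sB - (1 / sA + 1 / sB) * ⟪A, B⟫) := by
    rw [hT A, hT B]
    simp only [inner_sub_left, inner_sub_right, inner_add_left, real_inner_smul_left,
      real_inner_self_eq_norm_sq]
    rw [show ‖A - B‖ ^ 2 = ‖A‖ ^ 2 - 2 * ⟪A, B⟫ + ‖B‖ ^ 2 by
      rw [← real_inner_self_eq_norm_sq]
      simp only [inner_sub_left, inner_sub_right, real_inner_self_eq_norm_sq,
        real_inner_comm B A]
      ring]
    field_simp
    simp only [← hsA, ← hsB, real_inner_comm B A]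
    ring
  rw [expand]
  have h2 : (1 / sA + 1 / sB) * ⟪A, B⟫ ≤ (1 / sA + 1 / sB) * (‖A‖ * ‖B‖) := by
    apply mul_le_mul_of_nonneg_left hAB
    positivity
  nlinarith [mul_nonneg hτ (by linarith :
    (0:ℝ) ≤ ‖A‖ ^ 2 / sA + ‖B‖ ^ 2 / sB - (1 / sA + 1 / sB) * ⟪A, B⟫)]
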